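/- arXiv:1211.6310 — 6 statements merged into one kernel-verified Lean document; each statement's English description precedes it below -/
import Mathlib

section
/- Consider the Z/2-grading on the infinite-dimensional Grassmann algebra E induced by declaring deg(e_i) = 1 for i = 1,…,k and deg(e_i) = 0 for i > k. Then the product of any k+1 homogeneous elements of degree 1 is zero; that is, z_1 z_2 ⋯ z_{k+1} is a graded polynomial identity of E with this grading. -/
open ExteriorAlgebra

/-- The generator `e_i` of the infinite-dimensional Grassmann algebra. -/
noncomputable def grassGen (F : Type*) [Field F] (i : ℕ) : ExteriorAlgebra F (ℕ →₀ F) :=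
  ExteriorAlgebra.ι F (Finsupp.single i 1)

/-- The homogeneous component of degree `g ∈ ℤ/2` of the Grassmann algebra for the
grading `deg(·)_{k*}` (i.e. `deg(e_i) = 1` for the first `k` generators and `0`
otherwise): it is spanned by the products of generators in which the number of factors
among the first `k` generators is congruent to `g` modulo `2`. -/
noncomputable def grassCompKStar (F : Type*) [Field F] (k : ℕ) (g : ZMod 2) :
    Submodule F (ExteriorAlgebra F (ℕ →₀ F)) :=
  Submodule.span F
    {x | ∃ l : List ℕ, ((l.countP fun i => decide (i < k)) : ZMod 2) = g ∧
      x = (l.map (grassGen F)).prod}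

section Aux

variable {R M : Type*} [CommRing R] [AddCommGroup M] [Module R M]

lemma aux_mem_mul_prod_zero (a : M) (l : List M) (ha : a ∈ l) :
    ι R a * (l.map (ι R)).prod = 0 := by
  induction l with
  | nil => simp at ha
  | cons b t ih =>
    rcases List.mem_cons.mp ha with h | h
    · subst h
      rw [List.map_cons, List.prod_cons, ← mul_assoc, ι_sq_zero, zero_mul]
    · rw [List.map_cons, List.prod_cons, ← mul_assoc]
      have hsw : ι R a * ι R b = -(ι R b * ι R a) :=
        eq_neg_of_add_eq_zero_left (ι_add_mul_swap a b)
      rw [hsw, neg_mul, mul_assoc, ih h, mul_zero, neg_zero]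

lemma aux_dup_prod_zero (l : List M) (hl : ¬ l.Nodup) :
    (l.map (ι R)).prod = 0 := by
  induction l with
  | nil => simp at hl
  | cons a t ih =>
    rw [List.nodup_cons] at hl
    push_neg at hl
    rw [List.map_cons, List.prod_cons]
    by_cases h : a ∈ t
    · exact aux_mem_mul_prod_zero a t h
    · rw [ih (hl h), mul_zero]

end Aux

lemma aux_pigeonhole (k : ℕ) (l : List ℕ) (h : k + 1 ≤ l.countP fun i => decide (i < k)) :
    ¬ l.Nodup := by
  intro hnd
  have hnd' : (l.filter fun i => decide (i < k)).Nodup := hnd.filter _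
  have hsub : (l.filter fun i => decide (i < k)).toFinset ⊆ Finset.range k := by
    intro x hx
    rw [List.mem_toFinset, List.mem_filter] at hx
    simpa using hx.2
  have hcard := Finset.card_le_card hsub
  rw [List.toFinset_card_of_nodup hnd', Finset.card_range, ← List.countP_eq_length_filter] at hcard
  omega

lemma aux_monomial_zero (F : Type*) [Field F] (k : ℕ) (l : List ℕ)
    (h : k + 1 ≤ l.countP fun i => decide (i < k)) :
    (l.map (grassGen F)).prod = 0 := by
  have hl : ¬ l.Nodup := aux_pigeonhole k l h
  have : ¬ (l.map fun i => Finsupp.single i (1 : F)).Nodup := fun hn => hl hn.of_map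
  have := aux_dup_prod_zero (R := F) _ this
  rwa [List.map_map] at this

lemma aux_prod_mem (F : Type*) [Field F] (k : ℕ) (n : ℕ)
    (z : Fin n → ExteriorAlgebra F (ℕ →₀ F))
    (hz : ∀ t, z t ∈ grassCompKStar F k 1) :
    (List.ofFn z).prod ∈ Submodule.span F
      {x | ∃ l : List ℕ, n ≤ (l.countP fun i => decide (i < k)) ∧
        x = (l.map (grassGen F)).prod} := by
  induction n with
  | zero =>
    rw [List.ofFn_zero, List.prod_nil]
    exact Submodule.subset_span ⟨[], by simp⟩
  | succ n ih =>
    rw [List.ofFn_succ, List.prod_cons]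
    have h1 := hz 0
    have h2 := ih (fun i => z i.succ) (fun t => hz t.succ)
    have hmul : z 0 * (List.ofFn fun i => z i.succ).prod ∈
        Submodule.span F {x | ∃ l : List ℕ,
            ((l.countP fun i => decide (i < k)) : ZMod 2) = 1 ∧
            x = (l.map (grassGen F)).prod} *
          Submodule.span F {x | ∃ l : List ℕ,
            n ≤ (l.countP fun i => decide (i < k)) ∧ x = (l.map (grassGen F)).prod} :=
      Submodule.mul_mem_mul h1 h2
    rw [Submodule.span_mul_span] at hmul
    refine Submodule.span_le.mpr ?_ hmul
    rintro _ ⟨_, ⟨l1, hl1, rfl⟩, _, ⟨l2, hl2, rfl⟩, rfl⟩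
    refine Submodule.subset_span ⟨l1 ++ l2, ?_, by rw [List.map_append, List.prod_append]⟩
    rw [List.countP_append]
    have hl1' : (l1.countP fun i => decide (i < k)) ≠ 0 := by
      intro h0
      rw [h0] at hl1
      simp at hl1
    omega

/-- With the `ℤ/2`-grading on the Grassmann algebra `E` induced by `deg(e_i) = 1` for
`i = 1, …, k` and `deg(e_i) = 0` for `i > k`, the product of any `k + 1` homogeneous
elements of degree `1` is zero: `z₁ z₂ ⋯ z_{k+1}` is a graded identity of `E`. -/
theorem grassmann_kstar_monomial_identity (F : Type*) [Field F] [CharZero F] (k : ℕ)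
    (z : Fin (k + 1) → ExteriorAlgebra F (ℕ →₀ F))
    (hz : ∀ t, z t ∈ grassCompKStar F k 1) :
    (List.ofFn z).prod = 0 := by
  have h := aux_prod_mem F k (k + 1) z hz
  have hzero : Submodule.span F
      {x | ∃ l : List ℕ, k + 1 ≤ (l.countP fun i => decide (i < k)) ∧
        x = (l.map (grassGen F)).prod} ≤ ⊥ := by
    rw [Submodule.span_le]
    rintro _ ⟨l, hl, rfl⟩
    simp [aux_monomial_zero F k l hl]
  simpa using hzero h
end

section
/- With the Z/2-grading on the Grassmann algebra E induced by deg(e_i) = 1 for odd i and deg(e_i) = 0 for even i (the grading deg(·)_∞), E satisfies no graded monomial identity: for every sequence of degrees g_1,…,g_n ∈ Z/2 there exist homogeneous elements a_1,…,a_n of E of those degrees with a_1 a_2 ⋯ a_n ≠ 0. -/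
/-- The homogeneous component of degree `g ∈ ℤ/2` of the Grassmann algebra for the
grading `deg(·)_∞`, in which `deg(e_i) = 1` for odd `i` (in the 1-based indexing of the
generators, i.e. even `i` in our 0-based indexing) and `deg(e_i) = 0` otherwise: it is
spanned by the products of generators in which the number of factors of degree `1` is
congruent to `g` modulo `2`. -/
noncomputable def grassCompInf (F : Type*) [Field F] (g : ZMod 2) :
    Submodule F (ExteriorAlgebra F (ℕ →₀ F)) :=
  Submodule.span F
    {x | ∃ l : List ℕ, ((l.countP fun i => decide (i % 2 = 0)) : ZMod 2) = g ∧
      x = (l.map (grassGen F)).prod}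

/-- Products of `ι` of vectors whose "coordinate matrix" along an injective index family is
the identity are nonzero. -/
theorem grass_prod_ne_zero (F : Type*) [Field F] (n : ℕ) (idx : Fin n → ℕ)
    (hinj : Function.Injective idx) :
    (List.ofFn fun t => grassGen F (idx t)).prod ≠ 0 := by
  classical
  set v : Fin n → (ℕ →₀ F) := fun t => Finsupp.single (idx t) 1 with hv
  have hprod : (List.ofFn fun t => grassGen F (idx t)).prod
      = ExteriorAlgebra.ιMulti F n v := by
    rw [ExteriorAlgebra.ιMulti_apply]; rfl
  rw [hprod]
  -- linear map extracting coordinates along `idx`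
  let L : (ℕ →₀ F) →ₗ[F] (Fin n → F) :=
    { toFun := fun w => fun i => w (idx i)
      map_add' := fun x y => by ext i; simp
      map_smul' := fun c x => by ext i; simp }
  let D : (ℕ →₀ F) [⋀^Fin n]→ₗ[F] F :=
    (Matrix.detRowAlternating (R := F) (n := Fin n)).compLinearMap L
  let f : ∀ i : ℕ, (ℕ →₀ F) [⋀^Fin i]→ₗ[F] F :=
    fun i => if h : i = n then h ▸ D else 0
  intro h0
  have := congrArg (ExteriorAlgebra.liftAlternating f) h0
  rw [ExteriorAlgebra.liftAlternating_apply_ιMulti, map_zero] at this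
  have hfn : f n = D := by simp [f]
  rw [hfn] at this
  have hD : D v = 1 := by
    have hmat : (Matrix.of fun i j => (v i) (idx j)) = (1 : Matrix (Fin n) (Fin n) F) := by
      ext i j
      simp only [Matrix.of_apply, hv, Finsupp.single_apply, Matrix.one_apply]
      by_cases h : i = j
      · simp [h]
      · rw [if_neg h, if_neg (fun he => h (hinj he))]
    have hDv : D v = (Matrix.of fun i j => (v i) (idx j)).det := rfl
    rw [hDv, hmat, Matrix.det_one]
  rw [hD] at this
  exact one_ne_zero this

/-- With the grading `deg(·)_∞`, the Grassmann algebra satisfies no graded monomial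
identity: for every sequence of degrees `g₁, …, gₙ ∈ ℤ/2` there are homogeneous
elements `a₁, …, aₙ` of those degrees with `a₁ a₂ ⋯ aₙ ≠ 0`. -/
theorem grassmann_inf_no_monomial_identity (F : Type*) [Field F] [CharZero F]
    (n : ℕ) (g : Fin n → ZMod 2) :
    ∃ a : Fin n → ExteriorAlgebra F (ℕ →₀ F),
      (∀ t, a t ∈ grassCompInf F (g t)) ∧ (List.ofFn a).prod ≠ 0 := by
  classical
  set idx : Fin n → ℕ := fun t => 2 * (t : ℕ) + 1 + (g t).val with hidx
  have hval : ∀ t, (g t).val < 2 := fun t => (g t).isLt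
  have hinj : Function.Injective idx := by
    intro s t h
    have hs := hval s
    have ht := hval t
    have : (s : ℕ) = (t : ℕ) := by simp only [hidx] at h; omega
    exact Fin.ext this
  refine ⟨fun t => grassGen F (idx t), ?_, ?_⟩
  · intro t
    apply Submodule.subset_span
    refine ⟨[idx t], ?_, by simp⟩
    have hval2 := hval t
    have hg : ((g t).val : ZMod 2) = g t := by
      rw [ZMod.natCast_val, ZMod.cast_id]
    rw [← hg]
    congr 1
    have hval2 := hval t
    simp only [hidx, List.countP, List.countP.go]
    rcases (by omega : (g t).val = 0 ∨ (g t).val = 1) with h | h <;> simp only [h] <;>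
      simp [Nat.add_mod, Nat.mul_mod_right]
  · exact grass_prod_ne_zero F n idx hinj
end

section
/- Let G be a group, A a G-graded algebra satisfying a graded polynomial identity, and d_1,…,d_m positive integers. Let U_G(A) = F⟨X⟩/T_G(A) be the relatively free G-graded algebra of A, and for each k ∈ ℕ and g ∈ G let ξ_k^{(g)} ∈ UT(d_1,…,d_m; U_G(A)) be the generic block-triangular matrix whose (i,j) entry in the upper-triangular block region is the class of a distinct variable x_{ij,k}^{(g)} of degree g and whose entries below the block diagonal are 0. Then the subalgebra generated by all the ξ_k^{(g)} is isomorphic, as a G-graded algebra, to F⟨X⟩/T_G(UT(d_1,…,d_m;A)), the relatively free graded algebra of UT(d_1,…,d_m;A). -/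
noncomputable section

/-- The set of `G`-graded polynomial identities of a `G`-graded algebra `A`. -/
def gradedIdentities (F : Type*) [Field F] (G : Type*) [Group G]
    {A : Type*} [Ring A] [Algebra F A] (𝒜 : G → Submodule F A) :
    Set (FreeAlgebra F (ℕ × G)) :=
  {f | ∀ φ : FreeAlgebra F (ℕ × G) →ₐ[F] A,
    (∀ p : ℕ × G, φ (FreeAlgebra.ι F p) ∈ 𝒜 p.2) → φ f = 0}

/-- `blockOf d i` is the index of the block containing the row/column index `i`. -/
def blockOf (d : ℕ → ℕ) (i : ℕ) : ℕ :=
  sInf {t | i < ∑ s ∈ Finset.range (t + 1), d s}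

variable (F : Type*) [Field F] [CharZero F] (G : Type*) [Group G]
  {A : Type*} [Ring A] [Algebra F A] (𝒜 : G → Submodule F A) {m : ℕ} (d : Fin m → ℕ)

/-- The block function associated with the block sizes `d : Fin m → ℕ`. -/
def blk (i : ℕ) : ℕ := blockOf (fun s => if h : s < m then d ⟨s, h⟩ else 0) i

/-- The set of `G`-graded polynomial identities of `UT(d₁,…,dₘ; A)`, the algebra of
block upper-triangular matrices over `A` graded entrywise: graded polynomials
vanishing under every substitution of homogeneous block upper-triangular matrices of
the appropriate degrees. -/
def gradedIdentitiesUT : Set (FreeAlgebra F (ℕ × G)) :=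
  {f | ∀ φ : FreeAlgebra F (ℕ × G) →ₐ[F] Matrix (Fin (∑ t, d t)) (Fin (∑ t, d t)) A,
    (∀ p : ℕ × G, (∀ i j, φ (FreeAlgebra.ι F p) i j ∈ 𝒜 p.2) ∧
      ∀ i j : Fin (∑ t, d t), blk d (j : ℕ) < blk d (i : ℕ) →
        φ (FreeAlgebra.ι F p) i j = 0) → φ f = 0}

/-- The relatively free `G`-graded algebra `U_G(A) = F⟨X⟩/T_G(A)` of `A`, realized as
the quotient of the free algebra by the relation identifying elements congruent modulo
the ideal of graded identities of `A`. -/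
def relFree := RingQuot (fun a b : FreeAlgebra F (ℕ × G) => a - b ∈ gradedIdentities F G 𝒜)

instance : Ring (relFree F G 𝒜) := by unfold relFree; infer_instance
instance : Algebra F (relFree F G 𝒜) := by unfold relFree; infer_instance

/-- The generic block upper-triangular matrix `ξ_k^{(g)}` with entries from `U_G(A)`:
its `(i,j)` entry is the class of the distinct variable `x_{ij,k}^{(g)}` of degree `g`
when `(i,j)` is in the upper block-triangular region, and `0` below the block diagonal.
(The triple `(i,j,k)` is encoded into a single natural number via `Nat.pair`.) -/
def genericUT (k : ℕ) (g : G) :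
    Matrix (Fin (∑ t, d t)) (Fin (∑ t, d t)) (relFree F G 𝒜) :=
  fun i j =>
    if blk d (j : ℕ) < blk d (i : ℕ) then 0
    else RingQuot.mkAlgHom F _ (FreeAlgebra.ι F (Nat.pair (Nat.pair i j) k, g))

/-! ### Auxiliary material for the proof -/

/-- The generic block upper-triangular matrix with entries in the free algebra itself. -/
def genFreeUT (p : ℕ × G) :
    Matrix (Fin (∑ t, d t)) (Fin (∑ t, d t)) (FreeAlgebra F (ℕ × G)) :=
  fun i j =>
    if blk d (j : ℕ) < blk d (i : ℕ) then 0
    else FreeAlgebra.ι F (Nat.pair (Nat.pair i j) p.1, p.2)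

/-- Substitution of the free-algebra generic matrices. -/
def PsiUT : FreeAlgebra F (ℕ × G) →ₐ[F]
    Matrix (Fin (∑ t, d t)) (Fin (∑ t, d t)) (FreeAlgebra F (ℕ × G)) :=
  FreeAlgebra.lift F (genFreeUT F G d)

lemma PsiUT_ι (p : ℕ × G) :
    PsiUT F G d (FreeAlgebra.ι F p) = genFreeUT F G d p :=
  FreeAlgebra.lift_ι_apply _ _

lemma mapMatrix_PsiUT_ι {B : Type*} [Ring B] [Algebra F B]
    (ψ : FreeAlgebra F (ℕ × G) →ₐ[F] B) (p : ℕ × G) :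
    ((AlgHom.mapMatrix ψ).comp (PsiUT F G d)) (FreeAlgebra.ι F p) =
      (genFreeUT F G d p).map ψ := by
  rw [AlgHom.comp_apply, PsiUT_ι, AlgHom.mapMatrix_apply]

lemma mkT_eq_zero_iff (q : FreeAlgebra F (ℕ × G)) :
    RingQuot.mkAlgHom F
        (fun a b : FreeAlgebra F (ℕ × G) => a - b ∈ gradedIdentities F G 𝒜) q = 0
      ↔ q ∈ gradedIdentities F G 𝒜 := by
  constructor
  · intro h φ hφ
    have w : ∀ ⦃a b : FreeAlgebra F (ℕ × G)⦄,
        a - b ∈ gradedIdentities F G 𝒜 → φ a = φ b := by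
      intro a b hab
      have := hab φ hφ
      rw [map_sub, sub_eq_zero] at this
      exact this
    have := RingQuot.liftAlgHom_mkAlgHom_apply F φ w q
    rw [h, map_zero] at this
    exact this.symm
  · intro hq
    have hrel : (fun a b : FreeAlgebra F (ℕ × G) =>
        a - b ∈ gradedIdentities F G 𝒜) q 0 := by simpa using hq
    rw [RingQuot.mkAlgHom_rel F hrel]
    exact map_zero _

lemma Phi_eq_comp :
    (FreeAlgebra.lift F (fun p : ℕ × G => genericUT F G 𝒜 d p.1 p.2) :
        FreeAlgebra F (ℕ × G) →ₐ[F]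
          Matrix (Fin (∑ t, d t)) (Fin (∑ t, d t)) (relFree F G 𝒜)) =
      (AlgHom.mapMatrix (RingQuot.mkAlgHom F
        (fun a b : FreeAlgebra F (ℕ × G) => a - b ∈ gradedIdentities F G 𝒜))).comp
        (PsiUT F G d) := by
  apply FreeAlgebra.hom_ext
  funext p
  show (FreeAlgebra.lift F (fun p : ℕ × G => genericUT F G 𝒜 d p.1 p.2))
      (FreeAlgebra.ι F p) =
    ((AlgHom.mapMatrix (RingQuot.mkAlgHom F
        (fun a b : FreeAlgebra F (ℕ × G) => a - b ∈ gradedIdentities F G 𝒜))).comp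
        (PsiUT F G d)) (FreeAlgebra.ι F p)
  rw [FreeAlgebra.lift_ι_apply, mapMatrix_PsiUT_ι]
  funext i j
  rw [Matrix.map_apply]
  show (if blk d (j : ℕ) < blk d (i : ℕ) then 0
      else RingQuot.mkAlgHom F _ (FreeAlgebra.ι F (Nat.pair (Nat.pair i j) p.1, p.2))) =
    RingQuot.mkAlgHom F (fun a b : FreeAlgebra F (ℕ × G) =>
        a - b ∈ gradedIdentities F G 𝒜)
      (if blk d (j : ℕ) < blk d (i : ℕ) then 0
        else FreeAlgebra.ι F (Nat.pair (Nat.pair i j) p.1, p.2))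
  by_cases hlt : blk d (j : ℕ) < blk d (i : ℕ)
  · rw [if_pos hlt, if_pos hlt]
    exact (map_zero _).symm
  · rw [if_neg hlt, if_neg hlt]

/-- Every admissible substitution into block upper-triangular matrices over `B`
factors through `PsiUT` via an admissible substitution into `B`. -/
lemma factor_through_Psi {B : Type*} [Ring B] [Algebra F B] (ℬ : G → Submodule F B)
    (φ : FreeAlgebra F (ℕ × G) →ₐ[F] Matrix (Fin (∑ t, d t)) (Fin (∑ t, d t)) B)
    (hφ : ∀ p : ℕ × G, (∀ i j, φ (FreeAlgebra.ι F p) i j ∈ ℬ p.2) ∧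
      ∀ i j : Fin (∑ t, d t), blk d (j : ℕ) < blk d (i : ℕ) →
        φ (FreeAlgebra.ι F p) i j = 0) :
    ∃ ψ : FreeAlgebra F (ℕ × G) →ₐ[F] B,
      (∀ p : ℕ × G, ψ (FreeAlgebra.ι F p) ∈ ℬ p.2) ∧
      (AlgHom.mapMatrix ψ).comp (PsiUT F G d) = φ := by
  refine ⟨FreeAlgebra.lift F (fun p : ℕ × G =>
    if h : (p.1.unpair.1).unpair.1 < ∑ t, d t ∧ (p.1.unpair.1).unpair.2 < ∑ t, d t then
      φ (FreeAlgebra.ι F (p.1.unpair.2, p.2)) ⟨_, h.1⟩ ⟨_, h.2⟩ else 0), ?_, ?_⟩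
  · intro p
    rw [FreeAlgebra.lift_ι_apply]
    split
    · exact (hφ (p.1.unpair.2, p.2)).1 _ _
    · exact Submodule.zero_mem _
  · apply FreeAlgebra.hom_ext
    funext p
    show ((AlgHom.mapMatrix _).comp (PsiUT F G d)) (FreeAlgebra.ι F p) =
      φ (FreeAlgebra.ι F p)
    rw [mapMatrix_PsiUT_ι]
    funext i j
    rw [Matrix.map_apply]
    show (FreeAlgebra.lift F _)
        (if blk d (j : ℕ) < blk d (i : ℕ) then 0
          else FreeAlgebra.ι F (Nat.pair (Nat.pair i j) p.1, p.2)) =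
      φ (FreeAlgebra.ι F p) i j
    by_cases hlt : blk d (j : ℕ) < blk d (i : ℕ)
    · rw [if_pos hlt, map_zero]
      exact ((hφ p).2 i j hlt).symm
    · rw [if_neg hlt, FreeAlgebra.lift_ι_apply]
      simp only [Nat.unpair_pair]
      rw [dif_pos ⟨i.isLt, j.isLt⟩]

/-- The kernel of the generic substitution is exactly the set of graded identities of
the block upper-triangular matrix algebra. -/
lemma ker_Phi_eq :
    {f | (FreeAlgebra.lift F (fun p : ℕ × G => genericUT F G 𝒜 d p.1 p.2) :
        FreeAlgebra F (ℕ × G) →ₐ[F]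
          Matrix (Fin (∑ t, d t)) (Fin (∑ t, d t)) (relFree F G 𝒜)) f = 0} =
      gradedIdentitiesUT F G 𝒜 d := by
  ext f
  have key : (FreeAlgebra.lift F (fun p : ℕ × G => genericUT F G 𝒜 d p.1 p.2) :
      FreeAlgebra F (ℕ × G) →ₐ[F]
        Matrix (Fin (∑ t, d t)) (Fin (∑ t, d t)) (relFree F G 𝒜)) f = 0 ↔
      ∀ i j, PsiUT F G d f i j ∈ gradedIdentities F G 𝒜 := by
    have hentry : (FreeAlgebra.lift F (fun p : ℕ × G => genericUT F G 𝒜 d p.1 p.2) :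
        FreeAlgebra F (ℕ × G) →ₐ[F]
          Matrix (Fin (∑ t, d t)) (Fin (∑ t, d t)) (relFree F G 𝒜)) f
        = ((PsiUT F G d) f).map (RingQuot.mkAlgHom F
            (fun a b : FreeAlgebra F (ℕ × G) => a - b ∈ gradedIdentities F G 𝒜)) :=
      (AlgHom.congr_fun (Phi_eq_comp F G 𝒜 d) f).trans rfl
    rw [hentry]
    constructor
    · intro h i j
      rw [← mkT_eq_zero_iff F G 𝒜]
      have := congrFun (congrFun h i) j
      rw [Matrix.map_apply] at this
      exact this
    · intro h
      funext i j
      rw [Matrix.map_apply]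
      show RingQuot.mkAlgHom F _ (PsiUT F G d f i j) = (0 : Matrix _ _ (relFree F G 𝒜)) i j
      rw [(mkT_eq_zero_iff F G 𝒜 _).mpr (h i j)]
      rfl
  rw [Set.mem_setOf_eq, key]
  constructor
  · -- entries are identities of A ⟹ f is an identity of UT(A)
    intro h φ hφ
    obtain ⟨ψ, hψ1, hψ2⟩ := factor_through_Psi F G d 𝒜 φ hφ
    rw [← hψ2, AlgHom.comp_apply, AlgHom.mapMatrix_apply]
    funext i j
    rw [Matrix.map_apply]
    show ψ (PsiUT F G d f i j) = (0 : Matrix _ _ A) i j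
    rw [h i j ψ hψ1]
    rfl
  · -- f is an identity of UT(A) ⟹ entries are identities of A
    intro hf i j φ hφ
    have hφ' : ∀ p : ℕ × G,
        (∀ i j, ((AlgHom.mapMatrix φ).comp (PsiUT F G d)) (FreeAlgebra.ι F p) i j ∈ 𝒜 p.2) ∧
        ∀ i j : Fin (∑ t, d t), blk d (j : ℕ) < blk d (i : ℕ) →
          ((AlgHom.mapMatrix φ).comp (PsiUT F G d)) (FreeAlgebra.ι F p) i j = 0 := by
      intro p
      rw [mapMatrix_PsiUT_ι]
      constructor
      · intro i j
        rw [Matrix.map_apply]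
        show φ (if blk d (j : ℕ) < blk d (i : ℕ) then 0
          else FreeAlgebra.ι F (Nat.pair (Nat.pair i j) p.1, p.2)) ∈ 𝒜 p.2
        split
        · rw [map_zero]; exact Submodule.zero_mem _
        · exact hφ (Nat.pair (Nat.pair (i : ℕ) (j : ℕ)) p.1, p.2)
      · intro i j hlt
        rw [Matrix.map_apply]
        show φ (if blk d (j : ℕ) < blk d (i : ℕ) then 0
          else FreeAlgebra.ι F (Nat.pair (Nat.pair i j) p.1, p.2)) = 0
        rw [if_pos hlt, map_zero]
    have h0 := hf _ hφ'
    rw [AlgHom.comp_apply, AlgHom.mapMatrix_apply] at h0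
    have := congrFun (congrFun h0 i) j
    rw [Matrix.map_apply] at this
    exact this

/-- A model for the relatively free `G`-graded algebra of `UT(d₁,…,dₘ; A)`: the
substitution homomorphism `Φ` sending the variable `x_k^{(g)}` to the generic matrix
`ξ_k^{(g)}` has kernel exactly `T_G(UT(d₁,…,dₘ;A))`; consequently the subalgebra
generated by the generic matrices `ξ_k^{(g)}` is isomorphic to the relatively free
graded algebra `F⟨X⟩/T_G(UT(d₁,…,dₘ;A))`. -/
theorem generic_model_relatively_free
    (hone : (1 : A) ∈ 𝒜 1) (hmul : ∀ g h, ∀ a ∈ 𝒜 g, ∀ b ∈ 𝒜 h, a * b ∈ 𝒜 (g * h))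
    (hPI : ∃ f ∈ gradedIdentities F G 𝒜, f ≠ 0) :
    letI Φ : FreeAlgebra F (ℕ × G) →ₐ[F]
        Matrix (Fin (∑ t, d t)) (Fin (∑ t, d t)) (relFree F G 𝒜) :=
      FreeAlgebra.lift F (fun p : ℕ × G => genericUT F G 𝒜 d p.1 p.2)
    {f | Φ f = 0} = gradedIdentitiesUT F G 𝒜 d ∧
      Nonempty ((Algebra.adjoin F
          (Set.range fun p : ℕ × G => genericUT F G 𝒜 d p.1 p.2)) ≃ₐ[F]
        RingQuot (fun a b : FreeAlgebra F (ℕ × G) =>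
          a - b ∈ gradedIdentitiesUT F G 𝒜 d)) := by
  refine ⟨ker_Phi_eq F G 𝒜 d, ?_⟩
  set Φ : FreeAlgebra F (ℕ × G) →ₐ[F]
      Matrix (Fin (∑ t, d t)) (Fin (∑ t, d t)) (relFree F G 𝒜) :=
    FreeAlgebra.lift F (fun p : ℕ × G => genericUT F G 𝒜 d p.1 p.2) with hΦ
  have hker := ker_Phi_eq F G 𝒜 d
  have w : ∀ ⦃a b : FreeAlgebra F (ℕ × G)⦄,
      a - b ∈ gradedIdentitiesUT F G 𝒜 d → Φ a = Φ b := by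
    intro a b hab
    have : Φ (a - b) = 0 := by rw [← hker] at hab; exact hab
    rw [map_sub, sub_eq_zero] at this
    exact this
  set Φ' : RingQuot (fun a b : FreeAlgebra F (ℕ × G) =>
      a - b ∈ gradedIdentitiesUT F G 𝒜 d) →ₐ[F]
      Matrix (Fin (∑ t, d t)) (Fin (∑ t, d t)) (relFree F G 𝒜) :=
    RingQuot.liftAlgHom F ⟨Φ, w⟩ with hΦ'
  have hcomm : ∀ q, Φ' (RingQuot.mkAlgHom F _ q) = Φ q := fun q =>
    RingQuot.liftAlgHom_mkAlgHom_apply F Φ w q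
  have hinj : Function.Injective Φ' := by
    rw [injective_iff_map_eq_zero]
    intro x hx
    obtain ⟨q, rfl⟩ := RingQuot.mkAlgHom_surjective F _ x
    rw [hcomm] at hx
    have hq : q ∈ gradedIdentitiesUT F G 𝒜 d := by rw [← hker]; exact hx
    have hrel : (fun a b : FreeAlgebra F (ℕ × G) =>
        a - b ∈ gradedIdentitiesUT F G 𝒜 d) q 0 := by simpa using hq
    rw [RingQuot.mkAlgHom_rel F hrel]
    exact map_zero _
  have hrange : Φ'.range = Algebra.adjoin F
      (Set.range fun p : ℕ × G => genericUT F G 𝒜 d p.1 p.2) := by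
    rw [Algebra.adjoin_range_eq_range_freeAlgebra_lift, ← hΦ]
    ext x
    constructor
    · rintro ⟨y, rfl⟩
      obtain ⟨q, rfl⟩ := RingQuot.mkAlgHom_surjective F _ y
      exact ⟨q, (hcomm q).symm⟩
    · rintro ⟨q, rfl⟩
      exact ⟨RingQuot.mkAlgHom F _ q, hcomm q⟩
  exact ⟨(Subalgebra.equivOfEq _ _ hrange.symm).trans (AlgEquiv.ofInjective Φ' hinj).symm⟩
end
end

section
/- With the notation of the cyclic-shift endomorphism on generic matrices: let f_1,…,f_n be elements of the algebra generated by the generic matrices B_k = (x_{ij,k}) inside M_n(R), where R is the free algebra on the variables x_{ij,k}, and fix a column index k. Then the column vectors f_1^k,…,f_n^k (the k-th columns of f_1,…,f_n, viewed in R^n) are linearly independent over F if and only if the matrices f_1,…,f_n are linearly independent over F. -/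
noncomputable section

/-- The generic `n × n` matrix `B_k` over the free algebra on the variables
`x_{ij,k}`: its `(i,j)` entry is the variable `x_{ij,k}`. -/
def genericMatrix (F : Type*) [Field F] (n : ℕ) (k : ℕ) :
    Matrix (Fin n) (Fin n) (FreeAlgebra F (Fin n × Fin n × ℕ)) :=
  fun i j => FreeAlgebra.ι F (i, j, k)

/-- The cyclic shift endomorphism on the free algebra, sending `x_{ij,k}` to
`x_{i+1,j+1,k}` (indices mod `n`). -/
def shiftEnd (F : Type*) [Field F] (n : ℕ) [NeZero n] :
    FreeAlgebra F (Fin n × Fin n × ℕ) →ₐ[F] FreeAlgebra F (Fin n × Fin n × ℕ) :=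
  FreeAlgebra.lift F (fun p => FreeAlgebra.ι F (p.1 + 1, p.2.1 + 1, p.2.2))

/-- The shift endomorphism maps the `(i,j)` entry of any element of the generic
matrix algebra to its `(i+1,j+1)` entry. -/
theorem shift_entry (F : Type*) [Field F] (n : ℕ) [NeZero n]
    {M : Matrix (Fin n) (Fin n) (FreeAlgebra F (Fin n × Fin n × ℕ))}
    (hM : M ∈ Algebra.adjoin F (Set.range (genericMatrix F n))) (i j : Fin n) :
    shiftEnd F n (M i j) = M (i + 1) (j + 1) := by
  induction hM using Algebra.adjoin_induction generalizing i j with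
  | mem x hx =>
    obtain ⟨m, rfl⟩ := hx
    simp [genericMatrix, shiftEnd]
  | algebraMap c =>
    simp only [Matrix.algebraMap_matrix_apply]
    by_cases h : i = j
    · simp [h]
    · rw [if_neg h, if_neg (fun hc => h (add_right_cancel hc)), map_zero]
  | add x y hx hy ihx ihy => simp [Matrix.add_apply, ihx, ihy]
  | mul x y hx hy ihx ihy =>
    simp only [Matrix.mul_apply, map_sum, map_mul, ihx, ihy]
    exact Fintype.sum_equiv (Equiv.addRight (1 : Fin n)) _ _ (fun l => rfl)

/-- Let `f₁, …, f_N` be elements of the algebra generated by the generic matrices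
`B_k` inside `M_n(R)`, `R` the free algebra on the variables `x_{ij,k}`, and fix a
column index `k`. Then the `k`-th columns of the `f_t`, viewed as vectors in `Rⁿ`,
are linearly independent over `F` if and only if the matrices `f₁, …, f_N` are
linearly independent over `F`. -/
theorem generic_columns_linearIndependent_iff (F : Type*) [Field F] (n : ℕ) [NeZero n]
    {N : ℕ} (f : Fin N → Matrix (Fin n) (Fin n) (FreeAlgebra F (Fin n × Fin n × ℕ)))
    (hf : ∀ t, f t ∈ Algebra.adjoin F (Set.range (genericMatrix F n)))
    (k : Fin n) :
    LinearIndependent F (fun t : Fin N => (fun i : Fin n => f t i k)) ↔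
      LinearIndependent F f := by
  constructor
  · intro h
    rw [Fintype.linearIndependent_iff] at h ⊢
    intro c hc t
    refine h c ?_ t
    funext i
    have := congrFun (congrFun hc i) k
    simpa [Finset.sum_apply, Matrix.sum_apply] using this
  · intro h
    rw [Fintype.linearIndependent_iff] at h ⊢
    intro c hc t
    set g : Matrix (Fin n) (Fin n) (FreeAlgebra F (Fin n × Fin n × ℕ)) := ∑ s, c s • f s with hg
    have hgmem : g ∈ Algebra.adjoin F (Set.range (genericMatrix F n)) :=
      Subalgebra.sum_mem _ fun s _ => Subalgebra.smul_mem _ (hf s) _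
    have hgk : ∀ i, g i k = 0 := by
      intro i
      have := congrFun hc i
      simpa [hg, Matrix.sum_apply] using this
    -- propagate along columns using the shift
    open Fin.NatCast in
    have key : ∀ m : ℕ, ∀ i : Fin n, g i (k + (m : Fin n)) = 0 := by
      intro m
      induction m with
      | zero => simpa using hgk
      | succ m ih =>
        intro i
        have := shift_entry F n hgmem (i - 1) (k + (m : Fin n))
        rw [ih (i - 1)] at this
        have h2 : i - 1 + 1 = i := by simp
        rw [h2] at this
        have h3 : ((m + 1 : ℕ) : Fin n) = (m : Fin n) + 1 := by push_cast; ring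
        rw [h3, ← add_assoc, ← this, map_zero]
    open Fin.NatCast in
    have hg0 : g = 0 := by
      ext i j
      have := key (j - k).val i
      rwa [Fin.cast_val_eq_self, add_sub_cancel] at this
    refine h c ?_ t
    rw [← hg0, hg]
end
end

section
/- Let E be the Grassmann algebra with the Z/2-grading induced by deg(e_i) = 1 for i ≤ k and 0 otherwise (the grading deg(·)_{k*}), and let R be the Z/2-graded algebra of 2×2 upper-triangular matrices with entries in E, graded entrywise. Then the graded monomial z_1 z_2 ⋯ z_{k+1} in degree-1 variables is a graded polynomial identity of R, i.e., any product of k+1 homogeneous degree-1 elements of R is zero. -/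
/-- The homogeneous elements of degree `1` of `R = UT(1,1;E)`, the `2×2` upper
triangular matrices over the Grassmann algebra `E` with the grading `deg(·)_{k*}`,
graded entrywise: upper triangular matrices all of whose entries are homogeneous of
degree `1` in `E`. -/
def UT2deg1 (F : Type*) [Field F] (k : ℕ) :
    Set (Matrix (Fin 2) (Fin 2) (ExteriorAlgebra F (ℕ →₀ F))) :=
  {M | M 1 0 = 0 ∧ ∀ i j, M i j ∈ grassCompKStar F k 1}

section Aux

variable (F : Type*) [Field F]

/-- anticommutation -/
lemma grassGen_anticomm (i j : ℕ) :
    grassGen F i * grassGen F j = -(grassGen F j * grassGen F i) := by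
  have := ExteriorAlgebra.ι_add_mul_swap (R := F)
    (Finsupp.single i (1 : F)) (Finsupp.single j 1)
  unfold grassGen
  exact eq_neg_of_add_eq_zero_left this

lemma grassGen_mul_prod_mem {a : ℕ} {t : List ℕ} (ha : a ∈ t) :
    grassGen F a * (t.map (grassGen F)).prod = 0 := by
  induction t with
  | nil => simp at ha
  | cons b s ih =>
    rcases List.mem_cons.mp ha with rfl | hs
    · rw [List.map_cons, List.prod_cons, ← mul_assoc]
      have : grassGen F a * grassGen F a = 0 := ExteriorAlgebra.ι_sq_zero _
      rw [this, zero_mul]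
    · rw [List.map_cons, List.prod_cons, ← mul_assoc, grassGen_anticomm, neg_mul,
        mul_assoc, ih hs, mul_zero, neg_zero]

lemma prod_eq_zero_of_not_nodup {l : List ℕ} (hl : ¬ l.Nodup) :
    (l.map (grassGen F)).prod = 0 := by
  induction l with
  | nil => exact absurd List.nodup_nil hl
  | cons a t ih =>
    rw [List.map_cons, List.prod_cons]
    by_cases hat : a ∈ t
    · exact grassGen_mul_prod_mem F hat
    · have ht : ¬ t.Nodup := fun h => hl (List.nodup_cons.mpr ⟨hat, h⟩)
      rw [ih ht, mul_zero]

/-- span of products of at least `c` small generators -/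
noncomputable def Mc (k c : ℕ) : Submodule F (ExteriorAlgebra F (ℕ →₀ F)) :=
  Submodule.span F
    {x | ∃ l : List ℕ, c ≤ l.countP (fun i => decide (i < k)) ∧
      x = (l.map (grassGen F)).prod}

lemma grassComp_le_Mc (k : ℕ) : grassCompKStar F k 1 ≤ Mc F k 1 := by
  apply Submodule.span_mono
  rintro x ⟨l, hl, rfl⟩
  refine ⟨l, ?_, rfl⟩
  rcases Nat.eq_zero_or_pos (l.countP fun i => decide (i < k)) with hc | hc
  · rw [hc] at hl
    simp at hl
  · exact hc

lemma Mc_mul_le (k a b : ℕ) : Mc F k a * Mc F k b ≤ Mc F k (a + b) := by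
  rw [Mc, Mc, Submodule.span_mul_span]
  apply Submodule.span_le.mpr
  rintro _ ⟨x, ⟨l1, hl1, rfl⟩, y, ⟨l2, hl2, rfl⟩, rfl⟩
  apply Submodule.subset_span
  refine ⟨l1 ++ l2, ?_, by rw [List.map_append, List.prod_append]⟩
  rw [List.countP_append]
  omega

lemma Mc_top_eq_bot (k : ℕ) : Mc F k (k + 1) = ⊥ := by
  rw [eq_bot_iff]
  apply Submodule.span_le.mpr
  rintro _ ⟨l, hl, rfl⟩
  have hfl : ¬ l.Nodup := by
    intro hnd
    have h1 : (l.filter fun i => decide (i < k)).Nodup := hnd.filter _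
    have h2 : (l.filter fun i => decide (i < k)).toFinset ⊆ Finset.range k := by
      intro x hx
      simp only [List.mem_toFinset, List.mem_filter, decide_eq_true_eq] at hx
      exact Finset.mem_range.mpr hx.2
    have h3 := Finset.card_le_card h2
    rw [List.toFinset_card_of_nodup h1, Finset.card_range] at h3
    rw [List.countP_eq_length_filter] at hl
    omega
  simp [prod_eq_zero_of_not_nodup F hfl]

lemma entries_mem_mul {A B : Matrix (Fin 2) (Fin 2) (ExteriorAlgebra F (ℕ →₀ F))}
    {k a b : ℕ} (hA : ∀ i j, A i j ∈ Mc F k a) (hB : ∀ i j, B i j ∈ Mc F k b) :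
    ∀ i j, (A * B) i j ∈ Mc F k (a + b) := by
  intro i j
  rw [Matrix.mul_apply]
  apply Submodule.sum_mem
  intro c _
  exact Mc_mul_le F k a b (Submodule.mul_mem_mul (hA i c) (hB c j))

lemma entries_mem_prod {k : ℕ} (L : List (Matrix (Fin 2) (Fin 2) (ExteriorAlgebra F (ℕ →₀ F))))
    (hL : ∀ A ∈ L, ∀ i j, A i j ∈ Mc F k 1) :
    ∀ i j, L.prod i j ∈ Mc F k L.length := by
  induction L with
  | nil =>
    intro i j
    rw [List.prod_nil, List.length_nil]
    rcases eq_or_ne i j with rfl | hij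
    · rw [Matrix.one_apply_eq]
      exact Submodule.subset_span ⟨[], Nat.zero_le _, by simp⟩
    · rw [Matrix.one_apply_ne hij]
      exact Submodule.zero_mem _
  | cons A t ih =>
    rw [List.prod_cons]
    have : t.length + 1 = (A :: t).length := by simp
    have h := entries_mem_mul F (k := k) (a := 1) (b := t.length)
      (hL A List.mem_cons_self) (ih fun B hB => hL B (List.mem_cons_of_mem A hB))
    simpa [List.length_cons, Nat.add_comm] using h

end Aux

/-- With the grading `deg(·)_{k*}` on `E`, the graded monomial `z₁ z₂ ⋯ z_{k+1}` in
degree-`1` variables is a graded identity of `R = UT(1,1;E)`: any product of `k+1`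
homogeneous degree-`1` elements of `R` is zero. -/
theorem UT2_kstar_monomial_identity (F : Type*) [Field F] [CharZero F] (k : ℕ)
    (z : Fin (k + 1) → Matrix (Fin 2) (Fin 2) (ExteriorAlgebra F (ℕ →₀ F)))
    (hz : ∀ t, z t ∈ UT2deg1 F k) :
    (List.ofFn z).prod = 0 := by
  have hmem : ∀ A ∈ List.ofFn z, ∀ i j, A i j ∈ Mc F k 1 := by
    intro A hA i j
    obtain ⟨t, rfl⟩ := Set.mem_range.mp (List.mem_ofFn.mp hA)
    exact grassComp_le_Mc F k ((hz t).2 i j)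
  have h := entries_mem_prod F (List.ofFn z) hmem
  rw [List.length_ofFn] at h
  ext i j
  have := h i j
  rw [Mc_top_eq_bot F k, Submodule.mem_bot] at this
  rw [this, Matrix.zero_apply]
end

section
/- In the free Z/2-graded algebra modulo the T-ideal generated by [x_1,x_2,x_3] (the relatively free algebra of E with the deg(·)_∞ grading), the elements y_{i_1}⋯y_{i_n} z_{j_1}⋯z_{j_m} [x_{l_1},x_{l_2}]⋯[x_{l_{2s-1}},x_{l_{2s}}] with n,m,s ≥ 0, i_1 ≤ ⋯ ≤ i_n, j_1 ≤ ⋯ ≤ j_m, l_1 < ⋯ < l_{2s}, span the whole algebra. -/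
/-- The spanning set: the elements
`y_{i₁}⋯y_{iₙ} z_{j₁}⋯z_{jₘ} [x_{l₁},x_{l₂}]⋯[x_{l_{2s-1}},x_{l_{2s}}]`
of the free `ℤ/2`-graded algebra on even variables `y_i = x_{(i,0)}` and odd variables
`z_j = x_{(j,1)}`, with `i₁ ≤ ⋯ ≤ iₙ`, `j₁ ≤ ⋯ ≤ jₘ` and `l₁ < ⋯ < l_{2s}` (the
variables being linearly ordered by `(n, g) ↦ 2n + g`). -/
def spanningSet (F : Type*) [Field F] : Set (FreeAlgebra F (ℕ × ZMod 2)) :=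
  {x | ∃ (ys zs : List ℕ) (cs : List ((ℕ × ZMod 2) × (ℕ × ZMod 2))),
    ys.Chain' (· ≤ ·) ∧ zs.Chain' (· ≤ ·) ∧
    (cs.flatMap fun pq => [pq.1, pq.2]).Chain'
      (fun p q => 2 * p.1 + p.2.val < 2 * q.1 + q.2.val) ∧
    x = (ys.map fun i => FreeAlgebra.ι F (i, (0 : ZMod 2))).prod *
        (zs.map fun j => FreeAlgebra.ι F (j, (1 : ZMod 2))).prod *
        (cs.map fun pq => FreeAlgebra.ι F pq.1 * FreeAlgebra.ι F pq.2 -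
          FreeAlgebra.ι F pq.2 * FreeAlgebra.ι F pq.1).prod}

/-- The set of generators of the `T_{ℤ/2}`-ideal generated by the triple commutator
`[x₁,x₂,x₃]`: all elements `u·[[a,b],c]·v`. (Since the triple commutator is
multilinear, its consequences under graded substitutions form the two-sided ideal
generated by all triple commutators of elements of the free graded algebra, i.e. the
`F`-span of this set.) -/
def tripleCommIdealSet (F : Type*) [Field F] : Set (FreeAlgebra F (ℕ × ZMod 2)) :=
  {x | ∃ u a b c v : FreeAlgebra F (ℕ × ZMod 2),
    x = u * ((a * b - b * a) * c - c * (a * b - b * a)) * v}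

namespace Gr

local notation "V" => (ℕ × ZMod 2)

variable {F : Type*} [Field F]

/-- commutator -/
def cm (a b : FreeAlgebra F V) : FreeAlgebra F V := a * b - b * a

/-- the degree ordering on variables -/
def dg (p : V) : ℕ := 2 * p.1 + p.2.val

def PV (F : Type*) [Field F] (ε : ZMod 2) (l : List ℕ) : FreeAlgebra F V :=
  (l.map fun i => FreeAlgebra.ι F (i, ε)).prod

def PC (F : Type*) [Field F] (cs : List (V × V)) : FreeAlgebra F V :=
  (cs.map fun pq => cm (FreeAlgebra.ι F pq.1) (FreeAlgebra.ι F pq.2)).prod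

def fl (cs : List (V × V)) : List V := cs.flatMap fun pq => [pq.1, pq.2]

def sortedC (cs : List (V × V)) : Prop := (fl cs).Chain' fun p q => dg p < dg q

def J (F : Type*) [Field F] : Submodule F (FreeAlgebra F V) :=
  Submodule.span F (tripleCommIdealSet F)

def SS (F : Type*) [Field F] : Submodule F (FreeAlgebra F V) :=
  Submodule.span F (spanningSet F ∪ tripleCommIdealSet F)

lemma dg_inj : Function.Injective dg := by
  rintro ⟨n, g⟩ ⟨m, h⟩ e
  have hg : g.val < 2 := ZMod.val_lt g
  have hh : h.val < 2 := ZMod.val_lt h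
  simp only [dg] at e
  have h1 : n = m ∧ g.val = h.val := by omega
  obtain ⟨rfl, hv⟩ := h1
  have : g = h := ZMod.val_injective 2 hv
  rw [this]

lemma cm_self (a : FreeAlgebra F V) : cm a a = 0 := sub_self _

lemma cm_swap (a b : FreeAlgebra F V) : cm a b = -cm b a := by
  simp [cm]

lemma PV_nil (ε : ZMod 2) : PV F ε [] = 1 := rfl

lemma PV_cons (ε : ZMod 2) (i : ℕ) (l : List ℕ) :
    PV F ε (i :: l) = FreeAlgebra.ι F (i, ε) * PV F ε l := by
  simp [PV]

lemma PC_nil : PC F [] = 1 := rfl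

lemma PC_cons (p q : V) (cs : List (V × V)) :
    PC F ((p, q) :: cs) = cm (FreeAlgebra.ι F p) (FreeAlgebra.ι F q) * PC F cs := by
  simp [PC]

lemma fl_cons (pq : V × V) (cs : List (V × V)) : fl (pq :: cs) = pq.1 :: pq.2 :: fl cs := rfl

lemma mem_spanning {ys zs : List ℕ} {cs : List (V × V)}
    (h0 : ys.Chain' (· ≤ ·)) (h1 : zs.Chain' (· ≤ ·)) (h2 : sortedC cs) :
    PV F 0 ys * PV F 1 zs * PC F cs ∈ spanningSet F :=
  ⟨ys, zs, cs, h0, h1, h2, rfl⟩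

/-! ### chain helpers -/

lemma chainA {α} {R : α → α → Prop} (htr : ∀ {x y z}, R x y → R y z → R x z) :
    ∀ {l : List α} {a : α}, (a :: l).Chain' R → ∀ b ∈ l, R a b := by
  intro l
  induction l with
  | nil => intro a _ b hb; simp at hb
  | cons c t ih =>
    intro a h b hb
    rw [List.Chain', List.isChain_cons_cons] at h
    rcases List.mem_cons.1 hb with rfl | hb'
    · exact h.1
    · exact htr h.1 (ih h.2 b hb')

lemma chainB {α} {R : α → α → Prop} {a : α} {l : List α}
    (h : ∀ b ∈ l, R a b) (hl : l.Chain' R) : (a :: l).Chain' R := by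
  cases l with
  | nil => simp [List.Chain']
  | cons b t => exact List.isChain_cons_cons.2 ⟨h b (by simp), hl⟩

/-! ### the ideal -/

lemma trip_mul_left (g x : FreeAlgebra F V) (hx : x ∈ tripleCommIdealSet F) :
    g * x ∈ tripleCommIdealSet F := by
  obtain ⟨u, a, b, c, v, rfl⟩ := hx
  exact ⟨g * u, a, b, c, v, by simp only [mul_assoc]⟩

lemma trip_mul_right (g x : FreeAlgebra F V) (hx : x ∈ tripleCommIdealSet F) :
    x * g ∈ tripleCommIdealSet F := by
  obtain ⟨u, a, b, c, v, rfl⟩ := hx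
  exact ⟨u, a, b, c, v * g, by simp only [mul_assoc]⟩

lemma J_mul_left (g : FreeAlgebra F V) {x : FreeAlgebra F V} (hx : x ∈ J F) :
    g * x ∈ J F := by
  induction hx using Submodule.span_induction with
  | mem y hy => exact Submodule.subset_span (trip_mul_left g y hy)
  | zero => simp
  | add y z _ _ hy hz => rw [mul_add]; exact add_mem hy hz
  | smul r y _ hy => rw [mul_smul_comm]; exact Submodule.smul_mem _ r hy

lemma J_mul_right (g : FreeAlgebra F V) {x : FreeAlgebra F V} (hx : x ∈ J F) :
    x * g ∈ J F := by
  induction hx using Submodule.span_induction with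
  | mem y hy => exact Submodule.subset_span (trip_mul_right g y hy)
  | zero => simp
  | add y z _ _ hy hz => rw [add_mul]; exact add_mem hy hz
  | smul r y _ hy => rw [smul_mul_assoc]; exact Submodule.smul_mem _ r hy

lemma triple_mem (a b c : FreeAlgebra F V) : cm (cm a b) c ∈ J F :=
  Submodule.subset_span ⟨1, a, b, c, 1, by simp [cm]⟩

lemma central (a b x : FreeAlgebra F V) : cm a b * x - x * cm a b ∈ J F :=
  triple_mem a b x

lemma exch (a b c d : FreeAlgebra F V) :
    cm a b * cm c d + cm a c * cm b d ∈ J F := by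
  have h : cm a b * cm c d + cm a c * cm b d =
      cm (cm a (b * c)) d - cm (cm a b) d * c - d * cm (cm a c) b
        + cm (cm a c) b * d - cm (cm a c) d * b := by
    simp only [cm]; noncomm_ring
  rw [h]
  exact sub_mem (add_mem (sub_mem (sub_mem (triple_mem _ _ _)
    (J_mul_right _ (triple_mem _ _ _))) (J_mul_left _ (triple_mem _ _ _)))
    (J_mul_right _ (triple_mem _ _ _))) (J_mul_right _ (triple_mem _ _ _))

lemma mem_of_sub {T : Submodule F (FreeAlgebra F V)} (hJ : J F ≤ T)
    {x y : FreeAlgebra F V} (h : x - y ∈ J F) (hy : y ∈ T) : x ∈ T := by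
  have := T.add_mem (hJ h) hy
  simpa using this

lemma span_mul_left {s : Set (FreeAlgebra F V)} {T : Submodule F (FreeAlgebra F V)}
    (g : FreeAlgebra F V) (hgen : ∀ x ∈ s, g * x ∈ T) :
    ∀ a ∈ Submodule.span F s, g * a ∈ T := by
  intro a ha
  induction ha using Submodule.span_induction with
  | mem y hy => exact hgen y hy
  | zero => simp
  | add y z _ _ hy hz => rw [mul_add]; exact add_mem hy hz
  | smul r y _ hy => rw [mul_smul_comm]; exact T.smul_mem r hy

lemma span_mul_right {s : Set (FreeAlgebra F V)} {T : Submodule F (FreeAlgebra F V)}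
    (g : FreeAlgebra F V) (hgen : ∀ x ∈ s, x * g ∈ T) :
    ∀ a ∈ Submodule.span F s, a * g ∈ T := by
  intro a ha
  induction ha using Submodule.span_induction with
  | mem y hy => exact hgen y hy
  | zero => simp
  | add y z _ _ hy hz => rw [add_mul]; exact add_mem hy hz
  | smul r y _ hy => rw [smul_mul_assoc]; exact T.smul_mem r hy

lemma span_sandwich {s : Set (FreeAlgebra F V)} {T : Submodule F (FreeAlgebra F V)}
    (g h : FreeAlgebra F V) (hgen : ∀ x ∈ s, g * (x * h) ∈ T) :
    ∀ a ∈ Submodule.span F s, g * (a * h) ∈ T := by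
  intro a ha
  induction ha using Submodule.span_induction with
  | mem y hy => exact hgen y hy
  | zero => simp
  | add y z _ _ hy hz => rw [add_mul, mul_add]; exact add_mem hy hz
  | smul r y _ hy => rw [smul_mul_assoc, mul_smul_comm]; exact T.smul_mem r hy


/-! ### sorted commutator products -/

def CSet (F : Type*) [Field F] (s : Set V) : Set (FreeAlgebra F V) :=
  {x | ∃ cs, sortedC cs ∧ (∀ v ∈ fl cs, v ∈ s) ∧ x = PC F cs}

def MS (F : Type*) [Field F] (s : Set V) : Submodule F (FreeAlgebra F V) :=
  Submodule.span F (CSet F s ∪ tripleCommIdealSet F)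

lemma J_le_MS (s : Set V) : J F ≤ MS F s := Submodule.span_mono Set.subset_union_right

lemma MS_mono {s s' : Set V} (h : s ⊆ s') : MS F s ≤ MS F s' := by
  apply Submodule.span_mono
  apply Set.union_subset_union_left
  rintro x ⟨cs, h1, h2, rfl⟩
  exact ⟨cs, h1, fun v hv => h (h2 v hv), rfl⟩

lemma dupJ (p q r : V) :
    cm (FreeAlgebra.ι F p) (FreeAlgebra.ι F q) * cm (FreeAlgebra.ι F p) (FreeAlgebra.ι F r)
      ∈ J F := by
  have h := exch (FreeAlgebra.ι F p) (FreeAlgebra.ι F q) (FreeAlgebra.ι F p) (FreeAlgebra.ι F r)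
  simpa [cm_self] using h

lemma dupJ2 (p q t : V) :
    cm (FreeAlgebra.ι F p) (FreeAlgebra.ι F q) * cm (FreeAlgebra.ι F q) (FreeAlgebra.ι F t)
      ∈ J F := by
  have h := exch (FreeAlgebra.ι F p) (FreeAlgebra.ι F q) (FreeAlgebra.ι F t) (FreeAlgebra.ι F q)
  rw [cm_self, mul_zero, add_zero] at h
  have heq : cm (FreeAlgebra.ι F p) (FreeAlgebra.ι F q) * cm (FreeAlgebra.ι F q) (FreeAlgebra.ι F t)
      = -(cm (FreeAlgebra.ι F p) (FreeAlgebra.ι F q) * cm (FreeAlgebra.ι F t) (FreeAlgebra.ι F q)) := by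
    simp only [cm]; noncomm_ring
  rw [heq]; exact neg_mem h

lemma dupJ3 (p q r : V) :
    cm (FreeAlgebra.ι F p) (FreeAlgebra.ι F q) * cm (FreeAlgebra.ι F r) (FreeAlgebra.ι F p)
      ∈ J F := by
  have heq : cm (FreeAlgebra.ι F p) (FreeAlgebra.ι F q) * cm (FreeAlgebra.ι F r) (FreeAlgebra.ι F p)
      = -(cm (FreeAlgebra.ι F p) (FreeAlgebra.ι F q) * cm (FreeAlgebra.ι F p) (FreeAlgebra.ι F r)) := by
    simp only [cm]; noncomm_ring
  rw [heq]; exact neg_mem (dupJ p q r)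

lemma prepend {p0 q0 : V} {s : Set V} (h0 : dg p0 < dg q0) (hs : ∀ v ∈ s, dg q0 < dg v)
    {a : FreeAlgebra F V} (ha : a ∈ MS F s) :
    cm (FreeAlgebra.ι F p0) (FreeAlgebra.ι F q0) * a ∈ MS F (insert p0 (insert q0 s)) := by
  refine span_mul_left _ ?_ _ ha
  rintro x (⟨ds, hds, hent, rfl⟩ | hx)
  · refine Submodule.subset_span (Or.inl ⟨(p0, q0) :: ds, ?_, ?_, (PC_cons _ _ _).symm⟩)
    · show ((p0, q0) :: ds |> fl).Chain' _
      rw [fl_cons]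
      refine chainB ?_ (chainB ?_ hds)
      · intro b hb
        rcases List.mem_cons.1 hb with rfl | hb'
        · exact h0
        · exact lt_trans h0 (hs b (hent b hb'))
      · intro b hb; exact hs b (hent b hb)
    · intro v hv
      rw [fl_cons] at hv
      rcases List.mem_cons.1 hv with rfl | hv'
      · exact Set.mem_insert _ _
      rcases List.mem_cons.1 hv' with rfl | hv''
      · exact Set.mem_insert_of_mem _ (Set.mem_insert _ _)
      · exact Set.mem_insert_of_mem _ (Set.mem_insert_of_mem _ (hent v hv''))
  · exact Submodule.subset_span (Or.inr (trip_mul_left _ _ hx))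

lemma merge' : ∀ cs : List (V × V), sortedC cs → ∀ p q : V, dg p < dg q →
    cm (FreeAlgebra.ι F p) (FreeAlgebra.ι F q) * PC F cs ∈
      MS F (insert p (insert q {v | v ∈ fl cs})) := by
  intro cs
  induction cs with
  | nil =>
    intro _ p q hpq
    refine Submodule.subset_span (Or.inl ⟨[(p, q)], ?_, ?_, by simp [PC]⟩)
    · simpa [sortedC, fl, List.Chain'] using hpq
    · intro v hv; simp [fl] at hv; rcases hv with rfl | rfl <;> simp
  | cons hd tl ih =>
    obtain ⟨r, t⟩ := hd
    intro hs p q hpq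
    have h' : (r :: t :: fl tl).Chain' (fun a b => dg a < dg b) := hs
    have hrt : dg r < dg t := (List.isChain_cons_cons.1 h').1
    have htail : (t :: fl tl).Chain' (fun a b => dg a < dg b) := (List.isChain_cons_cons.1 h').2
    have hstl : sortedC tl := htail.tail
    have hbnd : ∀ v ∈ fl tl, dg t < dg v :=
      chainA (R := fun a b : V => dg a < dg b) (fun h1 h2 => lt_trans h1 h2) htail
    have ihW : ∀ x y : V, cm (FreeAlgebra.ι F x) (FreeAlgebra.ι F y) * PC F tl ∈
        MS F (insert x (insert y {v | v ∈ fl tl})) := by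
      intro x y
      rcases lt_trichotomy (dg x) (dg y) with h | h | h
      · exact ih hstl x y h
      · have : x = y := dg_inj h
        subst this
        rw [cm_self, zero_mul]; exact zero_mem _
      · have hm := ih hstl y x h
        rw [cm_swap, neg_mul]
        refine neg_mem (MS_mono ?_ hm)
        intro v hv; simp at hv ⊢; tauto
    rcases lt_trichotomy (dg q) (dg r) with hqr | hqr | hqr
    · -- direct prepend of (p,q)
      refine Submodule.subset_span (Or.inl ⟨(p, q) :: (r, t) :: tl, ?_, ?_, (PC_cons _ _ _).symm⟩)
      · show ((p, q) :: (r, t) :: tl |> fl).Chain' _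
        rw [fl_cons]
        have hq4 : ∀ b ∈ (r :: t :: fl tl), dg q < dg b := by
          intro b hb
          rcases List.mem_cons.1 hb with rfl | hb'
          · exact hqr
          rcases List.mem_cons.1 hb' with rfl | hb''
          · exact lt_trans hqr hrt
          · exact lt_trans (lt_trans hqr hrt) (hbnd b hb'')
        refine chainB ?_ (chainB hq4 h')
        intro b hb
        rcases List.mem_cons.1 hb with rfl | hb'
        · exact hpq
        · exact lt_trans hpq (hq4 b hb')
      · intro v hv
        rw [fl_cons] at hv
        rcases List.mem_cons.1 hv with rfl | hv'
        · exact Set.mem_insert _ _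
        rcases List.mem_cons.1 hv' with rfl | hv''
        · exact Set.mem_insert_of_mem _ (Set.mem_insert _ _)
        · exact Set.mem_insert_of_mem _ (Set.mem_insert_of_mem _ hv'')
    · -- q = r : duplicate, in J
      have : q = r := dg_inj hqr
      subst this
      rw [PC_cons, ← mul_assoc]
      exact J_le_MS _ (J_mul_right _ (dupJ2 p q t))
    · rcases lt_trichotomy (dg p) (dg r) with hpr | hpr | hpr
      · -- C1 : p < r < q : exchange, prepend (p, r)
        have hinner := ihW q t
        have hpre := prepend hpr (?_ :
            ∀ v ∈ insert q (insert t {v | v ∈ fl tl}), dg r < dg v) hinner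
        · refine mem_of_sub (J_le_MS _) ?_ (neg_mem (MS_mono ?_ hpre))
          · have heq : cm (FreeAlgebra.ι F p) (FreeAlgebra.ι F q) * PC F ((r, t) :: tl)
                - -(cm (FreeAlgebra.ι F p) (FreeAlgebra.ι F r) *
                    (cm (FreeAlgebra.ι F q) (FreeAlgebra.ι F t) * PC F tl))
                = (cm (FreeAlgebra.ι F p) (FreeAlgebra.ι F q) * cm (FreeAlgebra.ι F r) (FreeAlgebra.ι F t)
                  + cm (FreeAlgebra.ι F p) (FreeAlgebra.ι F r) * cm (FreeAlgebra.ι F q) (FreeAlgebra.ι F t))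
                  * PC F tl := by
              rw [PC_cons]; simp only [cm]; noncomm_ring
            rw [heq]
            exact J_mul_right _ (exch _ _ _ _)
          · intro v hv; simp [fl_cons] at hv ⊢; tauto
        · intro v hv
          simp at hv
          rcases hv with rfl | rfl | hv'
          · exact hqr
          · exact hrt
          · exact lt_trans hrt (hbnd v hv')
      · -- C2 : p = r : duplicate, in J
        have : p = r := dg_inj hpr
        subst this
        rw [PC_cons, ← mul_assoc]
        exact J_le_MS _ (J_mul_right _ (dupJ p q t))
      · rcases lt_trichotomy (dg p) (dg t) with hpt | hpt | hpt
        · -- C3a : r < p < t : exchange, prepend (r, p)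
          have hinner := ihW q t
          have hpre := prepend hpr (?_ :
              ∀ v ∈ insert q (insert t {v | v ∈ fl tl}), dg p < dg v) hinner
          · refine mem_of_sub (J_le_MS _) ?_ (MS_mono ?_ hpre)
            · have heq : cm (FreeAlgebra.ι F p) (FreeAlgebra.ι F q) * PC F ((r, t) :: tl)
                  - cm (FreeAlgebra.ι F r) (FreeAlgebra.ι F p) *
                    (cm (FreeAlgebra.ι F q) (FreeAlgebra.ι F t) * PC F tl)
                  = (cm (FreeAlgebra.ι F p) (FreeAlgebra.ι F q) * cm (FreeAlgebra.ι F r) (FreeAlgebra.ι F t)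
                    + cm (FreeAlgebra.ι F p) (FreeAlgebra.ι F r) * cm (FreeAlgebra.ι F q) (FreeAlgebra.ι F t))
                    * PC F tl := by
                rw [PC_cons]; simp only [cm]; noncomm_ring
              rw [heq]
              exact J_mul_right _ (exch _ _ _ _)
            · intro v hv; simp [fl_cons] at hv ⊢; tauto
          · intro v hv
            simp at hv
            rcases hv with rfl | rfl | hv'
            · exact hpq
            · exact hpt
            · exact lt_trans hpt (hbnd v hv')
        · -- C3b : p = t : duplicate, in J
          have : p = t := dg_inj hpt
          subst this
          rw [PC_cons, ← mul_assoc]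
          exact J_le_MS _ (J_mul_right _ (dupJ3 p q r))
        · -- C3c : t < p : blocks commute, prepend (r, t)
          have hinner := ihW p q
          have hpre := prepend hrt (?_ :
              ∀ v ∈ insert p (insert q {v | v ∈ fl tl}), dg t < dg v) hinner
          · refine mem_of_sub (J_le_MS _) ?_ (MS_mono ?_ hpre)
            · have heq : cm (FreeAlgebra.ι F p) (FreeAlgebra.ι F q) * PC F ((r, t) :: tl)
                  - cm (FreeAlgebra.ι F r) (FreeAlgebra.ι F t) *
                    (cm (FreeAlgebra.ι F p) (FreeAlgebra.ι F q) * PC F tl)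
                  = (cm (cm (FreeAlgebra.ι F p) (FreeAlgebra.ι F q))
                      (cm (FreeAlgebra.ι F r) (FreeAlgebra.ι F t))) * PC F tl := by
                rw [PC_cons]; simp only [cm]; noncomm_ring
              rw [heq]
              exact J_mul_right _ (triple_mem _ _ _)
            · intro v hv; simp [fl_cons] at hv ⊢; tauto
          · intro v hv
            simp at hv
            rcases hv with rfl | rfl | hv'
            · exact hpt
            · exact lt_trans hpt hpq
            · exact hbnd v hv'

lemma merge (cs : List (V × V)) (hs : sortedC cs) (p q : V) :
    cm (FreeAlgebra.ι F p) (FreeAlgebra.ι F q) * PC F cs ∈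
      MS F (insert p (insert q {v | v ∈ fl cs})) := by
  rcases lt_trichotomy (dg p) (dg q) with h | h | h
  · exact merge' cs hs p q h
  · have : p = q := dg_inj h
    subst this
    simp only [cm_self, zero_mul]; exact zero_mem _
  · have hm := merge' (F := F) cs hs q p h
    rw [cm_swap, neg_mul]
    refine neg_mem (MS_mono ?_ hm)
    intro v hv; simp at hv ⊢; tauto


/-! ### inserting a variable into a sorted monomial -/

def NSet (F : Type*) [Field F] (ε : ZMod 2) (s : Set ℕ) : Set (FreeAlgebra F V) :=
  {x | ∃ l, l.Chain' (· ≤ ·) ∧ (∀ i ∈ l, i ∈ s) ∧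
    (x = PV F ε l ∨ ∃ p q : V, x = PV F ε l * cm (FreeAlgebra.ι F p) (FreeAlgebra.ι F q))}

def NM (F : Type*) [Field F] (ε : ZMod 2) (s : Set ℕ) : Submodule F (FreeAlgebra F V) :=
  Submodule.span F (NSet F ε s ∪ tripleCommIdealSet F)

def WSet (F : Type*) [Field F] (ε : ZMod 2) (w : V) (s : Set ℕ) : Set (FreeAlgebra F V) :=
  {x | ∃ l, l.Chain' (· ≤ ·) ∧ (∀ i ∈ l, i ∈ s) ∧
    (x = PV F ε l * FreeAlgebra.ι F w ∨
      ∃ p q : V, x = PV F ε l * cm (FreeAlgebra.ι F p) (FreeAlgebra.ι F q))}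

def WM (F : Type*) [Field F] (ε : ZMod 2) (w : V) (s : Set ℕ) : Submodule F (FreeAlgebra F V) :=
  Submodule.span F (WSet F ε w s ∪ tripleCommIdealSet F)

lemma insert_same (ε : ZMod 2) : ∀ l : List ℕ, l.Chain' (· ≤ ·) → ∀ i : ℕ,
    FreeAlgebra.ι F (i, ε) * PV F ε l ∈ NM F ε (insert i {j | j ∈ l}) := by
  intro l
  induction l with
  | nil =>
    intro _ i
    refine Submodule.subset_span (Or.inl ⟨[i], ?_, ?_, Or.inl ?_⟩)
    · simp [List.Chain']
    · intro j hj; simp at hj; simp [hj]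
    · simp [PV]
  | cons a t ih =>
    intro hl i
    have hat : ∀ b ∈ t, a ≤ b :=
      chainA (R := fun x y : ℕ => x ≤ y) (fun h1 h2 => le_trans h1 h2) hl
    rcases le_or_gt i a with hia | hai
    · refine Submodule.subset_span (Or.inl ⟨i :: a :: t, List.isChain_cons_cons.2 ⟨hia, hl⟩, ?_,
        Or.inl (by simp [PV_cons, mul_assoc])⟩)
      intro j hj
      rcases List.mem_cons.1 hj with rfl | hj'
      · exact Set.mem_insert _ _
      · exact Set.mem_insert_of_mem _ hj'
    · have key : FreeAlgebra.ι F (i, ε) * PV F ε (a :: t)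
          = FreeAlgebra.ι F (a, ε) * (FreeAlgebra.ι F (i, ε) * PV F ε t)
            + cm (FreeAlgebra.ι F (i, ε)) (FreeAlgebra.ι F (a, ε)) * PV F ε t := by
        rw [PV_cons]; simp only [cm]; noncomm_ring
      rw [key]
      refine add_mem ?_ ?_
      · have h1 := ih hl.tail i
        refine span_mul_left (FreeAlgebra.ι F (a, ε)) ?_ _ h1
        rintro x (⟨l', hch, hsub, hx⟩ | hx)
        · have hal' : ∀ b ∈ l', a ≤ b := by
            intro b hb
            have := hsub b hb
            simp at this
            rcases this with rfl | hbt
            · exact le_of_lt hai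
            · exact hat b hbt
          have hch2 : (a :: l').Chain' (· ≤ ·) := chainB hal' hch
          have hsub2 : ∀ j ∈ a :: l', j ∈ (insert i {j | j ∈ a :: t} : Set ℕ) := by
            intro j hj
            rcases List.mem_cons.1 hj with rfl | hj'
            · simp
            · have := hsub j hj'
              simp at this ⊢
              tauto
          rcases hx with rfl | ⟨p, q, rfl⟩
          · exact Submodule.subset_span (Or.inl ⟨a :: l', hch2, hsub2, Or.inl (by simp [PV_cons, mul_assoc])⟩)
          · exact Submodule.subset_span (Or.inl ⟨a :: l', hch2, hsub2,
              Or.inr ⟨p, q, by rw [PV_cons, mul_assoc]⟩⟩)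
        · exact Submodule.subset_span (Or.inr (trip_mul_left _ _ hx))
      · refine mem_of_sub (Submodule.span_mono Set.subset_union_right) (central _ _ _)
          (Submodule.subset_span (Or.inl ⟨t, hl.tail, ?_, Or.inr ⟨(i, ε), (a, ε), rfl⟩⟩))
        intro j hj; simp; tauto

lemma pass (ε : ZMod 2) (w : V) : ∀ l : List ℕ, l.Chain' (· ≤ ·) →
    FreeAlgebra.ι F w * PV F ε l ∈ WM F ε w {j | j ∈ l} := by
  intro l
  induction l with
  | nil =>
    refine fun _ => Submodule.subset_span (Or.inl ⟨[], ?_, ?_, Or.inl ?_⟩)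
    · simp [List.Chain']
    · intro j hj; simp at hj
    · simp [PV_nil]
  | cons a t ih =>
    intro hl
    have hat : ∀ b ∈ t, a ≤ b :=
      chainA (R := fun x y : ℕ => x ≤ y) (fun h1 h2 => le_trans h1 h2) hl
    have key : FreeAlgebra.ι F w * PV F ε (a :: t)
        = FreeAlgebra.ι F (a, ε) * (FreeAlgebra.ι F w * PV F ε t)
          + cm (FreeAlgebra.ι F w) (FreeAlgebra.ι F (a, ε)) * PV F ε t := by
      rw [PV_cons]; simp only [cm]; noncomm_ring
    rw [key]
    refine add_mem ?_ ?_
    · have h1 := ih hl.tail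
      refine span_mul_left (FreeAlgebra.ι F (a, ε)) ?_ _ h1
      rintro x (⟨l', hch, hsub, hx⟩ | hx)
      · have hal' : ∀ b ∈ l', a ≤ b := by
          intro b hb
          have := hsub b hb
          simp at this
          exact hat b this
        have hch2 : (a :: l').Chain' (· ≤ ·) := chainB hal' hch
        have hsub2 : ∀ j ∈ a :: l', j ∈ ({j | j ∈ a :: t} : Set ℕ) := by
          intro j hj
          rcases List.mem_cons.1 hj with rfl | hj'
          · simp
          · have := hsub j hj'
            simp at this ⊢
            tauto
        rcases hx with rfl | ⟨p, q, rfl⟩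
        · exact Submodule.subset_span (Or.inl ⟨a :: l', hch2, hsub2,
            Or.inl (by rw [PV_cons, mul_assoc])⟩)
        · exact Submodule.subset_span (Or.inl ⟨a :: l', hch2, hsub2,
            Or.inr ⟨p, q, by rw [PV_cons, mul_assoc]⟩⟩)
      · exact Submodule.subset_span (Or.inr (trip_mul_left _ _ hx))
    · refine mem_of_sub (Submodule.span_mono Set.subset_union_right) (central _ _ _)
        (Submodule.subset_span (Or.inl ⟨t, hl.tail, ?_, Or.inr ⟨w, (a, ε), rfl⟩⟩))
      intro j hj; simp; tauto


/-! ### assembly -/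

lemma J_le_SS : J F ≤ SS F := Submodule.span_mono Set.subset_union_right

lemma Ymerge {l' zs' : List ℕ} {cs : List (V × V)}
    (hl' : l'.Chain' (· ≤ ·)) (hz : zs'.Chain' (· ≤ ·)) (hc : sortedC cs) (p q : V) :
    PV F 0 l' * (PV F 1 zs' *
      (cm (FreeAlgebra.ι F p) (FreeAlgebra.ι F q) * PC F cs)) ∈ SS F := by
  have hm := merge (F := F) cs hc p q
  have hgen : ∀ x ∈ CSet F (insert p (insert q {v | v ∈ fl cs})) ∪ tripleCommIdealSet F,
      (PV F 0 l' * PV F 1 zs') * x ∈ SS F := by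
    rintro x (⟨ds, hds, _, rfl⟩ | hx)
    · exact Submodule.subset_span (Or.inl (mem_spanning hl' hz hds))
    · exact Submodule.subset_span (Or.inr (trip_mul_left _ _ hx))
  have key := span_mul_left _ hgen _ hm
  simpa only [mul_assoc] using key

lemma cmZC {l' zs' : List ℕ} {cs : List (V × V)}
    (hl' : l'.Chain' (· ≤ ·)) (hz : zs'.Chain' (· ≤ ·)) (hc : sortedC cs) (p q : V) :
    (PV F 0 l' * cm (FreeAlgebra.ι F p) (FreeAlgebra.ι F q)) *
      (PV F 1 zs' * PC F cs) ∈ SS F := by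
  refine mem_of_sub J_le_SS ?_ (Ymerge hl' hz hc p q)
  have heq : (PV F 0 l' * cm (FreeAlgebra.ι F p) (FreeAlgebra.ι F q)) *
        (PV F 1 zs' * PC F cs)
      - PV F 0 l' * (PV F 1 zs' *
        (cm (FreeAlgebra.ι F p) (FreeAlgebra.ι F q) * PC F cs))
      = PV F 0 l' * ((cm (FreeAlgebra.ι F p) (FreeAlgebra.ι F q) * PV F 1 zs'
          - PV F 1 zs' * cm (FreeAlgebra.ι F p) (FreeAlgebra.ι F q)) * PC F cs) := by
    noncomm_ring
  rw [heq]
  exact J_mul_left _ (J_mul_right _ (central _ _ _))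

lemma mul_ι_mem (v : V) {a : FreeAlgebra F V} (ha : a ∈ SS F) :
    FreeAlgebra.ι F v * a ∈ SS F := by
  refine span_mul_left _ ?_ _ ha
  rintro x (⟨ys, zs, cs, hy, hz, hc, rfl⟩ | hx)
  · obtain ⟨n, g⟩ := v
    have hc' : sortedC cs := hc
    show FreeAlgebra.ι F (n, g) * (PV F 0 ys * PV F 1 zs * PC F cs) ∈ SS F
    have hg : g = 0 ∨ g = 1 := by revert g; decide
    rcases hg with rfl | rfl
    · -- even variable
      have h6 := insert_same (F := F) 0 ys hy n
      have hgen : ∀ x ∈ NSet F 0 (insert n {j | j ∈ ys}) ∪ tripleCommIdealSet F,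
          x * (PV F 1 zs * PC F cs) ∈ SS F := by
        rintro x (⟨l', hch, _, (rfl | ⟨p, q, rfl⟩)⟩ | hx)
        · rw [← mul_assoc]
          exact Submodule.subset_span (Or.inl (mem_spanning hch hz hc'))
        · exact cmZC hch hz hc' p q
        · exact Submodule.subset_span (Or.inr (trip_mul_right _ _ hx))
      have hfin := span_mul_right _ hgen _ h6
      simpa only [mul_assoc] using hfin
    · -- odd variable
      have h7 := pass (F := F) 0 (n, 1) ys hy
      have hgen : ∀ x ∈ WSet F 0 ((n, 1) : V) {j | j ∈ ys} ∪ tripleCommIdealSet F,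
          x * (PV F 1 zs * PC F cs) ∈ SS F := by
        rintro x (⟨l', hch, _, (rfl | ⟨p, q, rfl⟩)⟩ | hx)
        · -- x = PV 0 l' * ι (n,1)
          have h8 := insert_same (F := F) 1 zs hz n
          have hgen2 : ∀ y ∈ NSet F 1 (insert n {j | j ∈ zs}) ∪ tripleCommIdealSet F,
              PV F 0 l' * (y * PC F cs) ∈ SS F := by
            rintro y (⟨l'', hch2, _, (rfl | ⟨p, q, rfl⟩)⟩ | hy)
            · rw [← mul_assoc]
              exact Submodule.subset_span (Or.inl (mem_spanning hch hch2 hc'))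
            · have := Ymerge (F := F) hch hch2 hc' p q
              simpa only [mul_assoc] using this
            · exact Submodule.subset_span
                (Or.inr (trip_mul_left _ _ (trip_mul_right _ _ hy)))
          have h9 := span_sandwich (PV F 0 l') (PC F cs) hgen2 _ h8
          simpa only [mul_assoc] using h9
        · exact cmZC hch hz hc' p q
        · exact Submodule.subset_span (Or.inr (trip_mul_right _ _ hx))
      have hfin := span_mul_right _ hgen _ h7
      simpa only [mul_assoc] using hfin
  · exact Submodule.subset_span (Or.inr (trip_mul_left _ _ hx))

lemma word_mem : ∀ w : List V, (w.map (FreeAlgebra.ι F)).prod ∈ SS F := by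
  intro w
  induction w with
  | nil =>
    simp only [List.map_nil, List.prod_nil]
    refine Submodule.subset_span (Or.inl ⟨[], [], [], ?_, ?_, ?_, by simp⟩) <;> simp [sortedC, fl, List.Chain']
  | cons v w ih =>
    simp only [List.map_cons, List.prod_cons]
    exact mul_ι_mem v ih

end Gr

/-- In the relatively free algebra of the Grassmann algebra with the `deg(·)_∞`
grading, i.e. the free `ℤ/2`-graded algebra modulo the `T_{ℤ/2}`-ideal generated by
`[x₁,x₂,x₃]`, the elements
`y_{i₁}⋯y_{iₙ} z_{j₁}⋯z_{jₘ} [x_{l₁},x_{l₂}]⋯[x_{l_{2s-1}},x_{l_{2s}}]`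
(with weakly increasing `i`'s and `j`'s and strictly increasing `l`'s) span the whole
algebra: together with the ideal they span the free graded algebra over `F`. -/
theorem spanning_relatively_free_grassmann_inf (F : Type*) [Field F] [CharZero F] :
    Submodule.span F (spanningSet F ∪ tripleCommIdealSet F) = ⊤ := by
  rw [eq_top_iff]
  have h1 : (⊤ : Submodule F (FreeAlgebra F (ℕ × ZMod 2)))
      = Submodule.span F ((Submonoid.closure (Set.range (FreeAlgebra.ι F)) :
          Submonoid (FreeAlgebra F (ℕ × ZMod 2))) : Set (FreeAlgebra F (ℕ × ZMod 2))) := by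
    rw [← Algebra.adjoin_eq_span, FreeAlgebra.adjoin_range_ι]; rfl
  rw [h1]
  refine Submodule.span_le.2 ?_
  intro x hx
  rw [SetLike.mem_coe] at hx
  have hw : ∃ w : List (ℕ × ZMod 2), x = (w.map (FreeAlgebra.ι F)).prod := by
    induction hx using Submonoid.closure_induction with
    | mem y hy =>
      obtain ⟨v, rfl⟩ := hy
      exact ⟨[v], by simp⟩
    | one => exact ⟨[], by simp⟩
    | mul a b _ _ ha hb =>
      obtain ⟨wa, rfl⟩ := ha
      obtain ⟨wb, rfl⟩ := hb
      exact ⟨wa ++ wb, by simp⟩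
  obtain ⟨w, rfl⟩ := hw
  exact Gr.word_mem w
end
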